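/- Let 𝔫 be the 5-dimensional real Lie algebra l₅,₇ (case B) with orthonormal basis {E₁,…,E₅} and non-zero brackets [E₁,E₂] = m·E₃ + s·E₄ + u·E₅, [E₁,E₃] = v·E₄ + w·E₅, [E₁,E₄] = x·E₅, where m, v, x > 0, s > 0 and u, w ∈ ℝ. Then there exist no c ∈ ℝ and no derivation D of 𝔫 with Ric = c·Id + D; i.e. 𝔫 is never an algebraic Ricci soliton. -/
import Mathlib


open scoped BigOperators

namespace Nilsoliton7

noncomputable section

abbrev V : Type := Fin 5 → ℝ

/-- The orthonormal basis vectors E₁,…,E₅ (indexed 0,…,4). -/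
def E (i : Fin 5) : V := Pi.single i 1

/-- The inner product making `E` an orthonormal basis. -/
def ip (x y : V) : ℝ := ∑ i, x i * y i

/-- `D` is a derivation of the bracket `br`. -/
def IsDerivation (br : V → V → V) (D : V →ₗ[ℝ] V) : Prop :=
  ∀ X Y : V, D (br X Y) = br (D X) Y + br X (D Y)

/-- `Ric` is the Ricci operator of the nilpotent Lie group with left-invariant
metric determined by the bracket `br` and the orthonormal basis `E`. -/
def IsRicci (br : V → V → V) (Ric : V →ₗ[ℝ] V) : Prop :=
  ∀ X Y : V, ip (Ric X) Y =
      -(1/2) * (∑ i : Fin 5, ip (br X (E i)) (br Y (E i)))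
      + (1/4) * (∑ i : Fin 5, ∑ j : Fin 5, ip (br (E i) (E j)) X * ip (br (E i) (E j)) Y)

/-- The bracket of l₅,₇ (case B): [E₁,E₂] = m·E₃ + s·E₄ + u·E₅,
[E₁,E₃] = v·E₄ + w·E₅, [E₁,E₄] = x·E₅. -/
def br (m s u v w x : ℝ) (X Y : V) : V :=
  (m * (X 0 * Y 1 - X 1 * Y 0)) • E 2 + (s * (X 0 * Y 1 - X 1 * Y 0) + v * (X 0 * Y 2 - X 2 * Y 0)) • E 3 + (u * (X 0 * Y 1 - X 1 * Y 0) + w * (X 0 * Y 2 - X 2 * Y 0) + x * (X 0 * Y 3 - X 3 * Y 0)) • E 4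

theorem stmt7 (m s u v w x : ℝ) (hm : 0 < m) (hv : 0 < v) (hx : 0 < x) (hs : 0 < s)
    (Ric : V →ₗ[ℝ] V) (hRic : IsRicci (br m s u v w x) Ric) :
    ¬ ∃ (c : ℝ) (D : V →ₗ[ℝ] V), IsDerivation (br m s u v w x) D ∧
        Ric = c • (LinearMap.id : V →ₗ[ℝ] V) + D := by
  rintro ⟨c, D, hDer, hEq⟩
  have hD : ∀ X : V, D X = Ric X - c • X := by
    intro X
    rw [hEq]; simp
  -- Ricci entries
  have hA : Ric (Pi.single (2:Fin 5) (1:ℝ) : V) 1 = -(s * v + u * w) / 2 := by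
    have h := hRic (E 2) (E 1)
    simp [ip, E, br, Fin.sum_univ_five, Pi.single_apply] at h
    linarith
  have hB : Ric (Pi.single (3:Fin 5) (1:ℝ) : V) 1 = -(u * x) / 2 := by
    have h := hRic (E 3) (E 1)
    simp [ip, E, br, Fin.sum_univ_five, Pi.single_apply] at h
    linarith
  have hC : Ric (Pi.single (4:Fin 5) (1:ℝ) : V) 1 = 0 := by
    have h := hRic (E 4) (E 1)
    simp [ip, E, br, Fin.sum_univ_five, Pi.single_apply] at h
    linarith
  -- derivation equation from [E0, E2] at component 1
  have h1 := congrFun (hDer (E 0) (E 2)) 1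
  simp [br, E, Pi.single_apply, map_add, map_smul, hD] at h1
  -- derivation equation from [E0, E1] at component 1
  have h2 := congrFun (hDer (E 0) (E 1)) 1
  simp [br, E, Pi.single_apply, map_add, map_smul, hD] at h2
  rw [hB, hC] at h1
  rw [hA, hB, hC] at h2
  have h3 : u * (v * x) = 0 := by linear_combination -2 * h1
  have hu : u = 0 := by
    rcases mul_eq_zero.mp h3 with h | h
    · exact h
    · exact absurd h (ne_of_gt (mul_pos hv hx))
  rw [hu] at h2
  nlinarith [mul_pos (mul_pos hm hs) hv]

end

end Nilsoliton7
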